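/- In the join-semilattice of finite Q-labeled forests under the h-preorder, with join given by disjoint union, an element is join-irreducible if and only if it is h-equivalent to a Q-labeled tree. -/
import Mathlib


/-- A finite forest realized as a finite set of nonempty strings over `ℕ`,
closed under nonempty prefixes. -/
def IsForest (F : Finset (List ℕ)) : Prop :=
  (∀ s ∈ F, s ≠ []) ∧ ∀ s ∈ F, ∀ t : List ℕ, t <+: s → t ≠ [] → t ∈ F

/-- A tree is a forest with a least element (root). -/
def IsTree (T : Finset (List ℕ)) : Prop :=
  IsForest T ∧ ∃ r ∈ T, ∀ s ∈ T, r <+: s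

/-- The h-preorder on `Q`-labeled forests. -/
def hle {Q : Type*} [Preorder Q] (F : Finset (List ℕ)) (c : List ℕ → Q)
    (G : Finset (List ℕ)) (d : List ℕ → Q) : Prop :=
  ∃ f : List ℕ → List ℕ, (∀ s ∈ F, f s ∈ G) ∧
    (∀ s ∈ F, ∀ t ∈ F, s <+: t → f s <+: f t) ∧
    (∀ s ∈ F, c s ≤ d (f s))

/-- Disjoint union of two forests (tagging with `0` resp. `1`). -/
def dunion (F G : Finset (List ℕ)) : Finset (List ℕ) :=
  F.image (List.cons 0) ∪ G.image (List.cons 1)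

/-- Label function for the disjoint union. -/
def dlabel {Q : Type*} (c d : List ℕ → Q) : List ℕ → Q :=
  fun s => match s with
  | 0 :: t => c t
  | 1 :: t => d t
  | _ => c []

lemma hle_refl {Q : Type*} [Preorder Q] (F : Finset (List ℕ)) (c : List ℕ → Q) :
    hle F c F c :=
  ⟨id, fun s hs => hs, fun _ _ _ _ h => h, fun s _ => le_refl _⟩

lemma hle_trans {Q : Type*} [Preorder Q] {F G H : Finset (List ℕ)}
    {c d e : List ℕ → Q} (h1 : hle F c G d) (h2 : hle G d H e) : hle F c H e := by
  obtain ⟨f, hf1, hf2, hf3⟩ := h1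
  obtain ⟨g, hg1, hg2, hg3⟩ := h2
  exact ⟨g ∘ f, fun s hs => hg1 _ (hf1 s hs),
    fun s hs t ht hst => hg2 _ (hf1 s hs) _ (hf1 t ht) (hf2 s hs t ht hst),
    fun s hs => le_trans (hf3 s hs) (hg3 _ (hf1 s hs))⟩

lemma hle_subset {Q : Type*} [Preorder Q] {F G : Finset (List ℕ)}
    (c : List ℕ → Q) (h : F ⊆ G) : hle F c G c :=
  ⟨id, fun s hs => h hs, fun _ _ _ _ h => h, fun s _ => le_refl _⟩

/-- Join-irreducibility. -/
def hIrr {Q : Type*} [Preorder Q] (F : Finset (List ℕ)) (c : List ℕ → Q) : Prop :=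
  ∀ (G H : Finset (List ℕ)) (d e : List ℕ → Q), IsForest G → IsForest H →
    hle F c (dunion G H) (dlabel d e) → hle F c G d ∨ hle F c H e

lemma key {Q : Type*} [Preorder Q] : ∀ (n : ℕ) (F : Finset (List ℕ)) (c : List ℕ → Q),
    F.card ≤ n → IsForest F → F.Nonempty → hIrr F c →
    ∃ (T : Finset (List ℕ)) (t : List ℕ → Q), IsTree T ∧ hle F c T t ∧ hle T t F c := by
  intro n
  induction n with
  | zero =>
    intro F c hcard hF hne _
    rw [Nat.le_zero, Finset.card_eq_zero] at hcard
    subst hcard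
    exact absurd hne (by simp)
  | succ n ih =>
    intro F c hcard hF hne hirr
    obtain ⟨s0, hs0⟩ := hne
    -- get a root element [a] ∈ F
    obtain ⟨a, s0', rfl⟩ : ∃ a s0', s0 = a :: s0' := by
      cases s0 with
      | nil => exact absurd rfl (hF.1 _ hs0)
      | cons a s0' => exact ⟨a, s0', rfl⟩
    have haF : [a] ∈ F := hF.2 _ hs0 [a] ⟨s0', rfl⟩ (by simp)
    by_cases hall : ∀ s ∈ F, [a] <+: s
    · exact ⟨F, c, ⟨hF, ⟨[a], haF, hall⟩⟩, hle_refl F c, hle_refl F c⟩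
    · push_neg at hall
      obtain ⟨w, hwF, hwa⟩ := hall
      set G := F.filter (fun s => [a] <+: s) with hGdef
      set H := F.filter (fun s => ¬ [a] <+: s) with hHdef
      have hGsub : G ⊆ F := Finset.filter_subset _ _
      have hHsub : H ⊆ F := Finset.filter_subset _ _
      -- prefix agreement: for s <+: t nonempty, [a] <+: s ↔ [a] <+: t
      have hpre : ∀ s t : List ℕ, s ≠ [] → s <+: t → ([a] <+: s ↔ [a] <+: t) := by
        intro s t hsne hst
        cases s with
        | nil => exact absurd rfl hsne
        | cons b s' =>
          obtain ⟨u, rfl⟩ := hst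
          constructor
          · intro h; exact h.trans ⟨u, by simp⟩
          · intro h
            rw [List.cons_append, List.cons_prefix_cons] at h
            rw [List.cons_prefix_cons]
            exact ⟨h.1, by simp⟩
      have hGforest : IsForest G := by
        refine ⟨fun s hs => hF.1 s (hGsub hs), fun s hs t hts htne => ?_⟩
        rw [hGdef, Finset.mem_filter] at hs ⊢
        exact ⟨hF.2 s hs.1 t hts htne, ((hpre t s htne hts).mpr hs.2)⟩
      have hHforest : IsForest H := by
        refine ⟨fun s hs => hF.1 s (hHsub hs), fun s hs t hts htne => ?_⟩
        rw [hHdef, Finset.mem_filter] at hs ⊢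
        exact ⟨hF.2 s hs.1 t hts htne, fun h => hs.2 ((hpre t s htne hts).mp h)⟩
      -- F ≤ dunion G H
      have hsplit : hle F c (dunion G H) (dlabel c c) := by
        refine ⟨fun s => if [a] <+: s then 0 :: s else 1 :: s, ?_, ?_, ?_⟩
        · intro s hs
          by_cases h : [a] <+: s <;> simp only [h, if_pos, if_neg, if_true, if_false] <;>
            rw [dunion, Finset.mem_union]
          · exact Or.inl (Finset.mem_image.mpr ⟨s, Finset.mem_filter.mpr ⟨hs, h⟩, rfl⟩)
          · exact Or.inr (Finset.mem_image.mpr ⟨s, Finset.mem_filter.mpr ⟨hs, h⟩, rfl⟩)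
        · intro s hs t ht hst
          have : [a] <+: s ↔ [a] <+: t := hpre s t (hF.1 s hs) hst
          dsimp only
          by_cases h : [a] <+: s
          · rw [if_pos h, if_pos (this.mp h), List.cons_prefix_cons]; exact ⟨rfl, hst⟩
          · rw [if_neg h, if_neg (fun h' => h (this.mpr h')), List.cons_prefix_cons]
            exact ⟨rfl, hst⟩
        · intro s hs
          dsimp only
          by_cases h : [a] <+: s
          · rw [if_pos h]; exact le_refl _
          · rw [if_neg h]; exact le_refl _
      rcases hirr G H c c hGforest hHforest hsplit with hFG | hFH
      · -- recurse on G
        have hGF : hle G c F c := hle_subset c hGsub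
        have hGne : G.Nonempty := ⟨[a], Finset.mem_filter.mpr ⟨haF, List.prefix_refl _⟩⟩
        have hGcard : G.card ≤ n := by
          have : G ⊂ F := Finset.ssubset_iff_of_subset hGsub |>.mpr
            ⟨w, hwF, by simp [hGdef, Finset.mem_filter, hwa]⟩
          have := Finset.card_lt_card this
          omega
        have hGirr : hIrr G c := by
          intro A B d e hA hB hle1
          rcases hirr A B d e hA hB (hle_trans hFG hle1) with h | h
          · exact Or.inl (hle_trans hGF h)
          · exact Or.inr (hle_trans hGF h)
        obtain ⟨T, t, hT, h1, h2⟩ := ih G c hGcard hGforest hGne hGirr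
        exact ⟨T, t, hT, hle_trans hFG h1, hle_trans h2 hGF⟩
      · -- recurse on H
        have hHF : hle H c F c := hle_subset c hHsub
        have hHne : H.Nonempty := ⟨w, Finset.mem_filter.mpr ⟨hwF, hwa⟩⟩
        have hHcard : H.card ≤ n := by
          have : H ⊂ F := Finset.ssubset_iff_of_subset hHsub |>.mpr
            ⟨[a], haF, by simp [hHdef, Finset.mem_filter]⟩
          have := Finset.card_lt_card this
          omega
        have hHirr : hIrr H c := by
          intro A B d e hA hB hle1
          rcases hirr A B d e hA hB (hle_trans hFH hle1) with h | h
          · exact Or.inl (hle_trans hHF h)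
          · exact Or.inr (hle_trans hHF h)
        obtain ⟨T, t, hT, h1, h2⟩ := ih H c hHcard hHforest hHne hHirr
        exact ⟨T, t, hT, hle_trans hFH h1, hle_trans h2 hHF⟩

/-- In the semilattice of finite `Q`-labeled forests under the h-preorder with join
the disjoint union, a (nonempty) forest is join-irreducible iff it is h-equivalent
to a `Q`-labeled tree. -/
theorem stmt6 {Q : Type*} [Preorder Q] (F : Finset (List ℕ)) (c : List ℕ → Q)
    (hF : IsForest F) (hne : F.Nonempty) :
    (∀ (G H : Finset (List ℕ)) (d e : List ℕ → Q), IsForest G → IsForest H →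
        hle F c (dunion G H) (dlabel d e) → hle F c G d ∨ hle F c H e)
    ↔ ∃ (T : Finset (List ℕ)) (t : List ℕ → Q),
        IsTree T ∧ hle F c T t ∧ hle T t F c := by
  constructor
  · intro hirr
    exact key F.card F c le_rfl hF hne hirr
  · rintro ⟨T, t, ⟨hTforest, r, hrT, hroot⟩, hFT, hTF⟩ G H d e hG hH hFd
    -- T ≤ dunion G H
    obtain ⟨f, hf1, hf2, hf3⟩ := hle_trans hTF hFd
    have hfr := hf1 r hrT
    rw [dunion, Finset.mem_union] at hfr
    rcases hfr with hfr | hfr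
    · -- f r = 0 :: u with u ∈ G; show T ≤ G
      obtain ⟨u, huG, hu⟩ := Finset.mem_image.mp hfr
      left
      refine hle_trans hFT ⟨fun s => (f s).tail, ?_, ?_, ?_⟩
      all_goals
        have claim : ∀ s ∈ T, ∃ v ∈ G, f s = 0 :: v := by
          intro s hs
          have hpre : f r <+: f s := hf2 r hrT s hs (hroot s hs)
          rw [← hu] at hpre
          have hfs := hf1 s hs
          rw [dunion, Finset.mem_union] at hfs
          rcases hfs with hfs | hfs
          · obtain ⟨v, hvG, hv⟩ := Finset.mem_image.mp hfs
            exact ⟨v, hvG, hv.symm⟩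
          · obtain ⟨v, hvH, hv⟩ := Finset.mem_image.mp hfs
            rw [← hv, List.cons_prefix_cons] at hpre
            omega
      · intro s hs
        obtain ⟨v, hvG, hv⟩ := claim s hs
        dsimp only
        rw [hv]; exact hvG
      · intro s hs s' hs' hss
        obtain ⟨v, hvG, hv⟩ := claim s hs
        obtain ⟨v', hv'G, hv'⟩ := claim s' hs'
        have := hf2 s hs s' hs' hss
        dsimp only
        rw [hv, hv', List.cons_prefix_cons] at this
        rw [hv, hv']
        exact this.2
      · intro s hs
        obtain ⟨v, hvG, hv⟩ := claim s hs
        have := hf3 s hs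
        dsimp only
        rw [hv] at this ⊢
        exact this
    · -- f r = 1 :: u with u ∈ H; show T ≤ H
      obtain ⟨u, huH, hu⟩ := Finset.mem_image.mp hfr
      right
      refine hle_trans hFT ⟨fun s => (f s).tail, ?_, ?_, ?_⟩
      all_goals
        have claim : ∀ s ∈ T, ∃ v ∈ H, f s = 1 :: v := by
          intro s hs
          have hpre : f r <+: f s := hf2 r hrT s hs (hroot s hs)
          rw [← hu] at hpre
          have hfs := hf1 s hs
          rw [dunion, Finset.mem_union] at hfs
          rcases hfs with hfs | hfs
          · obtain ⟨v, hvG, hv⟩ := Finset.mem_image.mp hfs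
            rw [← hv, List.cons_prefix_cons] at hpre
            omega
          · obtain ⟨v, hvH, hv⟩ := Finset.mem_image.mp hfs
            exact ⟨v, hvH, hv.symm⟩
      · intro s hs
        obtain ⟨v, hvH, hv⟩ := claim s hs
        dsimp only
        rw [hv]; exact hvH
      · intro s hs s' hs' hss
        obtain ⟨v, hvH, hv⟩ := claim s hs
        obtain ⟨v', hv'H, hv'⟩ := claim s' hs'
        have := hf2 s hs s' hs' hss
        dsimp only
        rw [hv, hv', List.cons_prefix_cons] at this
        rw [hv, hv']
        exact this.2
      · intro s hs
        obtain ⟨v, hvH, hv⟩ := claim s hs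
        have := hf3 s hs
        dsimp only
        rw [hv] at this ⊢
        exact this
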